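/- For all θ in [0, π), the maximum over unit vectors x₂ ∈ ℝᵏ of (1/2)(3 - x₂·(x₀+x₁) - x₀·x₁), where x₀, x₁ are unit vectors with x₀·x₁ = cos θ, equals 9/4 - (1/4)(2cos(θ/2) - 1)². -/

import Mathlib

open Real
open scoped RealInnerProductSpace

theorem stmt_0 (k : ℕ) (hk : 2 ≤ k) (θ : ℝ) (hθ : θ ∈ Set.Ico 0 π)
    (x₀ x₁ : EuclideanSpace ℝ (Fin k)) (h0 : ‖x₀‖ = 1) (h1 : ‖x₁‖ = 1)
    (hangle : ⟪x₀, x₁⟫ = Real.cos θ) :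
    IsGreatest {v : ℝ | ∃ x₂ : EuclideanSpace ℝ (Fin k), ‖x₂‖ = 1 ∧
        v = (1/2) * (3 - ⟪x₂, x₀ + x₁⟫ - ⟪x₀, x₁⟫)}
      (9/4 - (1/4) * (2 * Real.cos (θ/2) - 1)^2) := by
  obtain ⟨hθ0, hθπ⟩ := hθ
  set c := Real.cos (θ/2) with hc
  have hcpos : 0 < c := Real.cos_pos_of_mem_Ioo
    ⟨by linarith [Real.pi_pos], by linarith [Real.pi_pos]⟩
  have hcosθ : Real.cos θ = 2 * c^2 - 1 := by
    have h := Real.cos_sq (θ/2)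
    rw [show 2*(θ/2) = θ by ring] at h
    nlinarith
  have hn : ‖x₀ + x₁‖ = 2 * c := by
    have h : ‖x₀ + x₁‖^2 = (2*c)^2 := by
      rw [norm_add_sq_real, h0, h1, hangle, hcosθ]; ring
    nlinarith [norm_nonneg (x₀ + x₁)]
  have hne : x₀ + x₁ ≠ 0 := by
    intro h
    rw [h, norm_zero] at hn
    linarith
  constructor
  · refine ⟨-(‖x₀ + x₁‖⁻¹ • (x₀ + x₁)), ?_, ?_⟩
    · rw [norm_neg, norm_smul, norm_inv, norm_norm,
        inv_mul_cancel₀ (norm_ne_zero_iff.mpr hne)]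
    · have hinner : ⟪-(‖x₀ + x₁‖⁻¹ • (x₀ + x₁)), x₀ + x₁⟫ = -(2*c) := by
        rw [inner_neg_left, real_inner_smul_left, real_inner_self_eq_norm_sq, hn]
        field_simp
      rw [hinner, hangle, hcosθ]; ring
  · rintro v ⟨x₂, hx2, rfl⟩
    have hcs : |⟪x₂, x₀ + x₁⟫| ≤ ‖x₂‖ * ‖x₀ + x₁‖ := abs_real_inner_le_norm _ _
    rw [hx2, hn, one_mul] at hcs
    have := abs_le.mp hcs
    rw [hangle, hcosθ]
    nlinarith [this.1]
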